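/- Let α ∈ ℂ, r ≥ 1, and A_1, …, A_r be n×n complex matrices, and set g(λ) = Id + ∑_{i=1}^r (λ−α)^{−i}A_i. If g(λ) is invertible for every λ ∈ ℂ ∖ {α}, then g is a finite product of loops of the form m_{α,k,N}(λ) = Id + (λ−α)^{−k}N, where k ≥ 1 is an integer and N is an n×n complex matrix with N² = 0. -/

import Mathlib

set_option synthInstance.maxHeartbeats 1000000
set_option maxHeartbeats 1000000
set_option maxRecDepth 4000
set_option linter.unusedSectionVars false
set_option linter.unusedVariables false
set_option linter.unnecessarySimpa false

open Matrix Sum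

namespace OneSing

variable {R : Type*} [EuclideanDomain R] [DecidableEq R]

open Matrix.TransvectionStruct Matrix.Pivot

section Euclid

variable {r : ℕ}

/-- Euclid's algorithm on the entry `(inl i, inr unit)` against the pivot entry
`(inr unit, inr unit)`, makes the entry `(inl i, inr unit)` zero via row transvections
touching only rows `inl i` and `inr unit`. -/
theorem euclid_entry :
    ∀ b : R, ∀ M : Matrix (Fin r ⊕ Unit) (Fin r ⊕ Unit) R, ∀ i : Fin r,
      M (inl i) (inr Unit.unit) = b →
      ∃ L : List (TransvectionStruct (Fin r ⊕ Unit) R),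
        ((L.map toMatrix).prod * M) (inl i) (inr Unit.unit) = 0 ∧
        ∀ a, a ≠ inl i → a ≠ inr Unit.unit → ∀ j,
          ((L.map toMatrix).prod * M) a j = M a j := by
  intro b
  induction b using WellFounded.induction (EuclideanDomain.r_wellFounded (R := R)) with
  | _ b IH =>
  intro M i hb
  by_cases hb0 : b = 0
  · exact ⟨[], by simp [hb, hb0], by simp⟩
  · -- step 1: pivot row ← pivot row − (pivot/b) · row (inl i)
    set p : Fin r ⊕ Unit := inr Unit.unit with hp
    have hip : (inl i : Fin r ⊕ Unit) ≠ p := by simp [hp]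
    set c : R := -(M p p / b) with hc
    set M1 := transvection p (inl i) c * M with hM1
    have h1pp : M1 p p = M p p % b := by
      rw [hM1, transvection_mul_apply_same, hc, hb, EuclideanDomain.mod_eq_sub_mul_div]
      ring
    have h1other : ∀ a, a ≠ p → ∀ j, M1 a j = M a j := fun a ha j => by
      rw [hM1, transvection_mul_apply_of_ne _ _ _ _ ha]
    have h1i : M1 (inl i) (inr Unit.unit) = b := by rw [h1other _ hip, hb]
    -- step 2,3,4 : swap rows (inl i) and p (with a sign)
    set M2 := transvection (inl i) p 1 * M1 with hM2
    set M3 := transvection p (inl i) (-1) * M2 with hM3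
    set M4 := transvection (inl i) p 1 * M3 with hM4
    have h2i : ∀ j, M2 (inl i) j = M1 (inl i) j + M1 p j := fun j => by
      rw [hM2, transvection_mul_apply_same, one_mul]
    have h2p : ∀ j, M2 p j = M1 p j := fun j => by
      rw [hM2, transvection_mul_apply_of_ne _ _ _ _ (Ne.symm hip)]
    have h2other : ∀ a, a ≠ inl i → a ≠ p → ∀ j, M2 a j = M1 a j := fun a ha _ j => by
      rw [hM2, transvection_mul_apply_of_ne _ _ _ _ ha]
    have h3p : ∀ j, M3 p j = -(M1 (inl i) j) := fun j => by
      rw [hM3, transvection_mul_apply_same, h2p, h2i]; ring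
    have h3i : ∀ j, M3 (inl i) j = M1 (inl i) j + M1 p j := fun j => by
      rw [hM3, transvection_mul_apply_of_ne _ _ _ _ hip, h2i]
    have h3other : ∀ a, a ≠ inl i → a ≠ p → ∀ j, M3 a j = M1 a j := fun a ha ha' j => by
      rw [hM3, transvection_mul_apply_of_ne _ _ _ _ ha', h2other a ha ha']
    have h4i : ∀ j, M4 (inl i) j = M1 p j := fun j => by
      rw [hM4, transvection_mul_apply_same, h3i, h3p, one_mul]; ring
    have h4p : ∀ j, M4 p j = -(M1 (inl i) j) := fun j => by
      rw [hM4, transvection_mul_apply_of_ne _ _ _ _ (Ne.symm hip), h3p]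
    have h4other : ∀ a, a ≠ inl i → a ≠ p → ∀ j, M4 a j = M a j := fun a ha ha' j => by
      rw [hM4, transvection_mul_apply_of_ne _ _ _ _ ha, h3other a ha ha', h1other a ha']
    -- new entry at (inl i, inr unit) is `M p p % b`, smaller than `b`
    have h4ib : M4 (inl i) (inr Unit.unit) = M p p % b := by rw [h4i, h1pp]
    obtain ⟨L0, hL0z, hL0o⟩ := IH (M p p % b) (EuclideanDomain.mod_lt _ hb0) M4 i h4ib
    refine ⟨L0 ++ [⟨inl i, p, hip, 1⟩, ⟨p, inl i, Ne.symm hip, -1⟩,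
        ⟨inl i, p, hip, 1⟩, ⟨p, inl i, Ne.symm hip, c⟩], ?_, ?_⟩
    · have : ((L0.map toMatrix).prod * M4) (inl i) (inr Unit.unit) = 0 := hL0z
      rw [List.map_append, List.prod_append]
      simpa [hM4, hM3, hM2, hM1, Matrix.mul_assoc, toMatrix_mk] using this
    · intro a ha hap j
      rw [List.map_append, List.prod_append]
      have e1 : ((L0.map toMatrix).prod * M4) a j = M a j :=
        (hL0o a ha hap j).trans (h4other a ha hap j)
      simpa [hM4, hM3, hM2, hM1, Matrix.mul_assoc, toMatrix_mk] using e1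

/-- Clear the entries `(inl i, inr unit)` for all `i` in a finset, by left transvections. -/
theorem clear_col (s : Finset (Fin r)) :
    ∀ M : Matrix (Fin r ⊕ Unit) (Fin r ⊕ Unit) R,
      ∃ L : List (TransvectionStruct (Fin r ⊕ Unit) R),
        (∀ i ∈ s, ((L.map toMatrix).prod * M) (inl i) (inr Unit.unit) = 0) ∧
        ∀ a : Fin r, a ∉ s → ∀ j, ((L.map toMatrix).prod * M) (inl a) j = M (inl a) j := by
  classical
  induction s using Finset.induction_on with
  | empty => exact fun M => ⟨[], by simp, by simp⟩
  | @insert i s hi IHs =>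
    intro M
    obtain ⟨L1, hz1, ho1⟩ := IHs M
    set M1 := (L1.map toMatrix).prod * M with hM1
    obtain ⟨L2, hz2, ho2⟩ := euclid_entry (M1 (inl i) (inr Unit.unit)) M1 i rfl
    refine ⟨L2 ++ L1, ?_, ?_⟩
    · intro i' hi'
      have hre : ((L2 ++ L1).map toMatrix).prod * M = (L2.map toMatrix).prod * M1 := by
        rw [List.map_append, List.prod_append, Matrix.mul_assoc, hM1]
      rcases Finset.mem_insert.1 hi' with h | h
      · rw [hre, h]; exact hz2
      · have hne : i' ≠ i := fun e => hi (e ▸ h)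
        rw [hre, ho2 _ (by simp [hne]) (by simp)]
        exact hz1 i' h
    · intro a ha j
      have hre : ((L2 ++ L1).map toMatrix).prod * M = (L2.map toMatrix).prod * M1 := by
        rw [List.map_append, List.prod_append, Matrix.mul_assoc, hM1]
      have hai : a ≠ i := fun e => ha (by simp [e])
      rw [hre, ho2 _ (by simp [hai]) (by simp)]
      exact ho1 a (fun e => ha (Finset.mem_insert_of_mem e)) j

/-- Clear the entries `(inr unit, inl i)` for all `i` in a finset, by right transvections,
assuming the pivot is a unit. -/
theorem clear_row (s : Finset (Fin r)) :
    ∀ M : Matrix (Fin r ⊕ Unit) (Fin r ⊕ Unit) R,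
      IsUnit (M (inr Unit.unit) (inr Unit.unit)) →
      ∃ L : List (TransvectionStruct (Fin r ⊕ Unit) R),
        (∀ i ∈ s, (M * (L.map toMatrix).prod) (inr Unit.unit) (inl i) = 0) ∧
        ∀ b, (∀ i ∈ s, b ≠ inl i) → ∀ a, (M * (L.map toMatrix).prod) a b = M a b := by
  classical
  induction s using Finset.induction_on with
  | empty => exact fun M _ => ⟨[], by simp, by simp⟩
  | @insert i s hi IHs =>
    intro M hg
    obtain ⟨L1, hz1, ho1⟩ := IHs M hg
    set M1 := M * (L1.map toMatrix).prod with hM1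
    have hpiv : M1 (inr Unit.unit) (inr Unit.unit) = M (inr Unit.unit) (inr Unit.unit) :=
      ho1 _ (by simp) _
    obtain ⟨v, hv⟩ := IsUnit.exists_right_inv (hpiv ▸ hg)
    set c : R := -(v * M1 (inr Unit.unit) (inl i)) with hc
    set t : TransvectionStruct (Fin r ⊕ Unit) R := ⟨inr Unit.unit, inl i, by simp, c⟩ with ht
    have hre : M * ((L1 ++ [t]).map toMatrix).prod =
        M1 * transvection (inr Unit.unit) (inl i) c := by
      rw [List.map_append, List.prod_append, hM1, Matrix.mul_assoc]
      simp [ht, toMatrix_mk]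
    refine ⟨L1 ++ [t], ?_, ?_⟩
    · intro i' hi'
      rcases Finset.mem_insert.1 hi' with h | h
      · subst h
        rw [hre, mul_transvection_apply_same, hc]
        have hvg : v * M1 (inr Unit.unit) (inr Unit.unit) = 1 := by rw [mul_comm]; exact hv
        linear_combination (-(M1 (inr Unit.unit) (inl i'))) * hvg
      · have hne : i' ≠ i := fun e => hi (e ▸ h)
        rw [hre, mul_transvection_apply_of_ne _ _ _ _ (by simp [hne])]
        exact hz1 i' h
    · intro b hb a
      have hbi : b ≠ inl i := hb i (Finset.mem_insert_self _ _)
      rw [hre, mul_transvection_apply_of_ne _ _ _ _ hbi]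
      exact ho1 b (fun i' hi' => hb i' (Finset.mem_insert_of_mem hi')) a

theorem det_transvec_prod {p : Type*} [Fintype p] [DecidableEq p]
    (L : List (TransvectionStruct p R)) :
    ((L.map toMatrix).prod).det = 1 := by
  induction L with
  | nil => simp
  | cons t L IH => rw [List.map_cons, List.prod_cons, det_mul, IH, t.det, one_mul]

theorem exists_isTwoBlockDiagonal_ED (M : Matrix (Fin r ⊕ Unit) (Fin r ⊕ Unit) R)
    (h : IsUnit M.det) :
    ∃ L L' : List (TransvectionStruct (Fin r ⊕ Unit) R),
      IsTwoBlockDiagonal ((L.map toMatrix).prod * M * (L'.map toMatrix).prod) := by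
  classical
  obtain ⟨L, hz, -⟩ := clear_col (r := r) Finset.univ M
  set M1 := (L.map toMatrix).prod * M with hM1
  have hdet1 : IsUnit M1.det := by
    rw [hM1, det_mul, det_transvec_prod, one_mul]; exact h
  obtain ⟨u, hu⟩ := (Matrix.isUnit_iff_isUnit_det M1).2 hdet1
  have hinv : (↑u⁻¹ : Matrix (Fin r ⊕ Unit) (Fin r ⊕ Unit) R) * M1 = 1 := by
    rw [← hu]; exact u.inv_mul
  have h1 : ((↑u⁻¹ : Matrix (Fin r ⊕ Unit) (Fin r ⊕ Unit) R) * M1)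
      (inr Unit.unit) (inr Unit.unit) = 1 := by rw [hinv]; simp
  rw [Matrix.mul_apply, Fintype.sum_sum_type] at h1
  have h1' : (↑u⁻¹ : Matrix (Fin r ⊕ Unit) (Fin r ⊕ Unit) R) (inr Unit.unit) (inr Unit.unit) *
      M1 (inr Unit.unit) (inr Unit.unit) = 1 := by
    have hsum0 : ∑ i : Fin r, (↑u⁻¹ : Matrix (Fin r ⊕ Unit) (Fin r ⊕ Unit) R)
        (inr Unit.unit) (inl i) * M1 (inl i) (inr Unit.unit) = 0 :=
      Finset.sum_eq_zero (fun i _ => by rw [hz i (Finset.mem_univ i), mul_zero])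
    rw [hsum0, zero_add, Fintype.sum_unique] at h1
    exact h1
  have hgu : IsUnit (M1 (inr Unit.unit) (inr Unit.unit)) :=
    IsUnit.of_mul_eq_one _ (by rw [mul_comm]; exact h1')
  obtain ⟨L', hz', ho'⟩ := clear_row (r := r) Finset.univ M1 hgu
  refine ⟨L, L', ?_⟩
  have hassoc : (L.map toMatrix).prod * M * (L'.map toMatrix).prod =
      M1 * (L'.map toMatrix).prod := by rw [hM1]
  constructor
  · ext i j
    have hj : j = Unit.unit := rfl
    rw [toBlocks₁₂]
    simp only [of_apply, hassoc]
    rw [ho' (inr Unit.unit) (fun i' _ => by simp) (inl i)]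
    exact hz i (Finset.mem_univ i)
  · ext i j
    have hi : i = Unit.unit := rfl
    rw [toBlocks₂₁]
    simp only [of_apply, hassoc]
    exact hz' j (Finset.mem_univ j)

/-- Inductive step: from size `r` to `Fin r ⊕ Unit`. -/
theorem diag_induction_ED
    (IH : ∀ M : Matrix (Fin r) (Fin r) R, IsUnit M.det →
      ∃ (L₀ L₀' : List (TransvectionStruct (Fin r) R)) (D₀ : Fin r → R),
        (L₀.map toMatrix).prod * M * (L₀'.map toMatrix).prod = diagonal D₀)
    (M : Matrix (Fin r ⊕ Unit) (Fin r ⊕ Unit) R) (h : IsUnit M.det) :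
    ∃ (L L' : List (TransvectionStruct (Fin r ⊕ Unit) R)) (D : Fin r ⊕ Unit → R),
      (L.map toMatrix).prod * M * (L'.map toMatrix).prod = diagonal D := by
  rcases exists_isTwoBlockDiagonal_ED M h with ⟨L₁, L₁', hM⟩
  let M' := (L₁.map toMatrix).prod * M * (L₁'.map toMatrix).prod
  let M'' := toBlocks₁₁ M'
  set c := M' (inr Unit.unit) (inr Unit.unit) with hc
  have hM'block : M' = fromBlocks M'' 0 0 (diagonal fun _ => c) := by
    rw [← fromBlocks_toBlocks M', hM.1, hM.2]
    rfl
  have hdetM' : IsUnit M'.det := by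
    rw [show M'.det = M.det by
      simp only [M', det_mul, det_transvec_prod]; ring]
    exact h
  have hdetM'' : IsUnit M''.det := by
    rw [hM'block, det_fromBlocks_zero₂₁] at hdetM'
    exact isUnit_of_mul_isUnit_left hdetM'
  rcases IH M'' hdetM'' with ⟨L₀, L₀', D₀, h₀⟩
  refine ⟨L₀.map (sumInl Unit) ++ L₁, L₁' ++ L₀'.map (sumInl Unit),
      Sum.elim D₀ fun _ => c, ?_⟩
  suffices (L₀.map (toMatrix ∘ sumInl Unit)).prod * M' *
      (L₀'.map (toMatrix ∘ sumInl Unit)).prod = diagonal (Sum.elim D₀ fun _ => c) by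
    simpa [M', Matrix.mul_assoc] using this
  rw [hM'block]
  simp [h₀]

end Euclid

/-- Reduction to diagonal form is invariant under reindexing. -/
theorem reindex_diag_ED {p q : Type*} [Fintype p] [DecidableEq p] [Fintype q] [DecidableEq q]
    (M : Matrix p p R) (e : p ≃ q)
    (H : ∃ (L L' : List (TransvectionStruct q R)) (D : q → R),
        (L.map toMatrix).prod * Matrix.reindexAlgEquiv R _ e M * (L'.map toMatrix).prod =
          diagonal D) :
    ∃ (L L' : List (TransvectionStruct p R)) (D : p → R),
      (L.map toMatrix).prod * M * (L'.map toMatrix).prod = diagonal D := by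
  rcases H with ⟨L₀, L₀', D₀, h₀⟩
  refine ⟨L₀.map (reindexEquiv e.symm), L₀'.map (reindexEquiv e.symm), D₀ ∘ e, ?_⟩
  have : M = reindexAlgEquiv R _ e.symm (reindexAlgEquiv R _ e M) := by
    simp only [Equiv.symm_symm, submatrix_submatrix, reindex_apply, submatrix_id_id,
      Equiv.symm_comp_self, reindexAlgEquiv_apply]
  rw [this]
  simp only [toMatrix_reindexEquiv_prod, List.map_map, reindexAlgEquiv_apply]
  simp only [← reindexAlgEquiv_apply R, ← reindexAlgEquiv_mul, h₀]
  simp only [Equiv.symm_symm, reindex_apply, submatrix_diagonal_equiv, reindexAlgEquiv_apply]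

theorem exists_diag_ED_aux (k : ℕ) (p : Type) [Fintype p] [DecidableEq p]
    (hk : Fintype.card p = k) (M : Matrix p p R) (h : IsUnit M.det) :
    ∃ (L L' : List (TransvectionStruct p R)) (D : p → R),
      (L.map toMatrix).prod * M * (L'.map toMatrix).prod = diagonal D := by
  induction k generalizing p M with
  | zero =>
    refine ⟨List.nil, List.nil, fun _ => 1, ?_⟩
    ext i j
    rw [Fintype.card_eq_zero_iff] at hk
    exact hk.elim' i
  | succ r IH =>
    have e : p ≃ Fin r ⊕ Unit := by
      refine Fintype.equivOfCardEq ?_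
      rw [hk, @Fintype.card_sum (Fin r) Unit _ _]
      simp
    apply reindex_diag_ED M e
    have hdet : IsUnit (Matrix.reindexAlgEquiv R _ e M).det := by
      rwa [reindexAlgEquiv_apply, Matrix.det_reindex_self]
    exact diag_induction_ED (fun N hN => IH (Fin r) (by simp) N hN) _ hdet

/-- Any matrix with unit determinant over a Euclidean domain is the product of transvections,
a diagonal matrix with unit entries, and transvections. -/
theorem exists_transvec_diag_ED {p : Type*} [Fintype p] [DecidableEq p]
    (M : Matrix p p R) (h : IsUnit M.det) :
    ∃ (L L' : List (TransvectionStruct p R)) (D : p → R),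
      (∀ i, IsUnit (D i)) ∧
      M = (L.map toMatrix).prod * diagonal D * (L'.map toMatrix).prod := by
  have e : p ≃ Fin (Fintype.card p) := Fintype.equivOfCardEq (by simp)
  have H : ∃ (L L' : List (TransvectionStruct p R)) (D : p → R),
      (L.map toMatrix).prod * M * (L'.map toMatrix).prod = diagonal D := by
    apply reindex_diag_ED M e
    apply exists_diag_ED_aux _ _ rfl
    rwa [reindexAlgEquiv_apply, Matrix.det_reindex_self]
  rcases H with ⟨L, L', D, hD⟩
  have hDu : ∀ i, IsUnit (D i) := by
    have hdet : IsUnit (diagonal D).det := by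
      rw [← hD, det_mul, det_mul, det_transvec_prod, det_transvec_prod, one_mul, mul_one]
      exact h
    rw [det_diagonal] at hdet
    intro i
    have := Finset.mul_prod_erase Finset.univ D (Finset.mem_univ i)
    rw [← this] at hdet
    exact isUnit_of_mul_isUnit_left hdet
  refine ⟨L.reverse.map TransvectionStruct.inv, L'.reverse.map TransvectionStruct.inv, D,
    hDu, ?_⟩
  suffices M = (L.reverse.map (toMatrix ∘ TransvectionStruct.inv)).prod * (L.map toMatrix).prod
      * M * ((L'.map toMatrix).prod *
        (L'.reverse.map (toMatrix ∘ TransvectionStruct.inv)).prod) by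
    simpa [← hD, Matrix.mul_assoc]
  rw [reverse_inv_prod_mul_prod, prod_mul_reverse_inv_prod, Matrix.one_mul, Matrix.mul_one]

section PolyPart

open Polynomial

variable {n : ℕ}

/-- Matrices of the form `1 + X^k • N` with `k ≥ 1` and `N² = 0`. -/
def Allowed (Q : Matrix (Fin n) (Fin n) ℂ[X]) : Prop :=
  ∃ (k : ℕ) (N : Matrix (Fin n) (Fin n) ℂ),
    1 ≤ k ∧ N * N = 0 ∧ Q = 1 + (X ^ k : ℂ[X]) • N.map C

/-- Either a constant invertible matrix or an allowed loop. -/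
def Good (Q : Matrix (Fin n) (Fin n) ℂ[X]) : Prop :=
  (∃ S : Matrix (Fin n) (Fin n) ℂ, IsUnit S ∧ Q = (C : ℂ →+* ℂ[X]).mapMatrix S) ∨ Allowed Q

theorem mul_list_sum_zero (E : Matrix (Fin n) (Fin n) ℂ[X]) :
    ∀ l : List (Matrix (Fin n) (Fin n) ℂ[X]), (∀ E' ∈ l, E * E' = 0) → E * l.sum = 0 := by
  intro l
  induction l with
  | nil => simp
  | cons F lf IHf =>
    intro h
    rw [List.sum_cons, mul_add, h F (List.mem_cons_self),
      IHf (fun a ha => h a (List.mem_cons_of_mem _ ha)), add_zero]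

theorem prod_one_add (l : List (Matrix (Fin n) (Fin n) ℂ[X]))
    (hl : ∀ E ∈ l, ∀ E' ∈ l, E * E' = 0) :
    (l.map (fun E => 1 + E)).prod = 1 + l.sum := by
  induction l with
  | nil => simp
  | cons E l IHl =>
    rw [List.map_cons, List.prod_cons, IHl (fun a ha b hb =>
      hl a (List.mem_cons_of_mem _ ha) b (List.mem_cons_of_mem _ hb)), List.sum_cons]
    have hEs : E * l.sum = 0 := mul_list_sum_zero E l
      (fun a ha => hl E (List.mem_cons_self) a (List.mem_cons_of_mem _ ha))
    rw [mul_add, mul_one, add_mul, one_mul, hEs]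
    abel

theorem sum_single (i j : Fin n) (f : ℕ → ℂ[X]) (d : ℕ) :
    ∑ k ∈ Finset.range d, single i j (f k) =
      single i j (∑ k ∈ Finset.range d, f k) := by
  ext a b
  simp only [Matrix.sum_apply, single, of_apply]
  by_cases h : i = a ∧ j = b
  · simp [h]
  · simp [h]

theorem list_range_map_sum {M : Type*} [AddCommMonoid M] (f : ℕ → M) (d : ℕ) :
    ((List.range d).map f).sum = ∑ k ∈ Finset.range d, f k := by
  induction d with
  | zero => simp
  | succ d IH => rw [List.range_succ, List.map_append, List.sum_append,
      Finset.sum_range_succ, IH]; simp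

theorem mapC_stdBasis (i j : Fin n) (a : ℂ) :
    (single i j a).map (C : ℂ →+* ℂ[X]) = single i j (Polynomial.C a) := by
  ext c d
  simp only [Matrix.map_apply, single, of_apply]
  by_cases h : i = c ∧ j = d
  · simp [h]
  · simp [h]

theorem transvection_decomp (i j : Fin n) (hij : i ≠ j) (c : ℂ[X]) :
    ∃ Lg : List (Matrix (Fin n) (Fin n) ℂ[X]),
      (∀ Q ∈ Lg, Good Q) ∧ transvection i j c = Lg.prod := by
  set l : List (Matrix (Fin n) (Fin n) ℂ[X]) :=
    (List.range (c.natDegree + 1)).map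
      (fun k => single i j (Polynomial.C (c.coeff k) * X ^ k)) with hl
  have hzero : ∀ E ∈ l, ∀ E' ∈ l, E * E' = 0 := by
    intro E hE E' hE'
    rw [hl] at hE hE'
    obtain ⟨k, -, rfl⟩ := List.mem_map.1 hE
    obtain ⟨k', -, rfl⟩ := List.mem_map.1 hE'
    exact single_mul_single_of_ne (h := Ne.symm hij) ..
  refine ⟨l.map (fun E => 1 + E), ?_, ?_⟩
  · intro Q hQ
    obtain ⟨E, hE, rfl⟩ := List.mem_map.1 hQ
    rw [hl] at hE
    obtain ⟨k, -, rfl⟩ := List.mem_map.1 hE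
    rcases Nat.eq_zero_or_pos k with hk | hk
    · left
      refine ⟨transvection i j (c.coeff k), ?_, ?_⟩
      · exact (Matrix.isUnit_iff_isUnit_det _).2
          (by rw [det_transvection_of_ne _ _ hij]; exact isUnit_one)
      · subst hk
        rw [transvection, map_add, _root_.map_one, RingHom.mapMatrix_apply, mapC_stdBasis,
          pow_zero, mul_one]
    · right
      refine ⟨k, single i j (c.coeff k), hk,
        single_mul_single_of_ne (h := Ne.symm hij) .., ?_⟩
      rw [mapC_stdBasis, smul_single, smul_eq_mul, mul_comm]
  · rw [prod_one_add l hzero, hl, list_range_map_sum, sum_single, transvection]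
    congr 1
    exact congrArg _ (Polynomial.as_sum_range_C_mul_X_pow c)

theorem diag_decomp (D : Fin n → ℂ[X]) (hD : ∀ i, IsUnit (D i)) :
    ∃ S : Matrix (Fin n) (Fin n) ℂ, IsUnit S ∧
      Matrix.diagonal D = (C : ℂ →+* ℂ[X]).mapMatrix S := by
  have : ∀ i, ∃ r : ℂ, IsUnit r ∧ Polynomial.C r = D i :=
    fun i => Polynomial.isUnit_iff.1 (hD i)
  choose d hd1 hd2 using this
  refine ⟨Matrix.diagonal d, ?_, ?_⟩
  · refine (Matrix.isUnit_iff_isUnit_det _).2 ?_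
    rw [Matrix.det_diagonal]
    exact isUnit_iff_ne_zero.2 (Finset.prod_ne_zero_iff.2 fun i _ => (hd1 i).ne_zero)
  · rw [RingHom.mapMatrix_apply, Matrix.diagonal_map (map_zero C)]
    exact congrArg Matrix.diagonal (funext fun i => (hd2 i).symm)

theorem transvec_list_decomp (Lt : List (TransvectionStruct (Fin n) ℂ[X])) :
    ∃ Lg : List (Matrix (Fin n) (Fin n) ℂ[X]),
      (∀ Q ∈ Lg, Good Q) ∧ (Lt.map toMatrix).prod = Lg.prod := by
  induction Lt with
  | nil => exact ⟨[], by simp, by simp⟩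
  | cons t Lt IH =>
    obtain ⟨Lg, hLg, hprod⟩ := IH
    obtain ⟨Lg1, hLg1, hprod1⟩ := transvection_decomp t.i t.j t.hij t.c
    refine ⟨Lg1 ++ Lg, ?_, ?_⟩
    · intro Q hQ
      rcases List.mem_append.1 hQ with h | h
      · exact hLg1 Q h
      · exact hLg Q h
    · rw [List.map_cons, List.prod_cons, List.prod_append, hprod, ← hprod1]
      rcases t with ⟨ti, tj, htij, tc⟩
      rfl

theorem push_const (Lg : List (Matrix (Fin n) (Fin n) ℂ[X])) (h : ∀ Q ∈ Lg, Good Q) :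
    ∃ (S : Matrix (Fin n) (Fin n) ℂ) (La : List (Matrix (Fin n) (Fin n) ℂ[X])),
      IsUnit S ∧ (∀ Q ∈ La, Allowed Q) ∧
      Lg.prod = (C : ℂ →+* ℂ[X]).mapMatrix S * La.prod := by
  induction Lg with
  | nil => exact ⟨1, [], isUnit_one, by simp, by simp⟩
  | cons Q Lg IH =>
    obtain ⟨S, La, hS, hLa, hprod⟩ := IH (fun Q' hQ' => h Q' (List.mem_cons_of_mem _ hQ'))
    rcases h Q (List.mem_cons_self) with ⟨T, hT, rfl⟩ | ⟨k, N, hk, hN, rfl⟩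
    · refine ⟨T * S, La, hT.mul hS, hLa, ?_⟩
      rw [List.prod_cons, hprod, ← Matrix.mul_assoc, ← _root_.map_mul]
    · obtain ⟨u, hu⟩ := hS
      set U : Matrix (Fin n) (Fin n) ℂ := ↑u with hU
      set V : Matrix (Fin n) (Fin n) ℂ := ↑u⁻¹ with hV
      have huv : U * V = 1 := by rw [hU, hV]; exact u.mul_inv
      have hvu : V * U = 1 := by rw [hU, hV]; exact u.inv_mul
      set N' : Matrix (Fin n) (Fin n) ℂ := V * N * U with hN'
      have hN'0 : N' * N' = 0 := by
        calc N' * N' = V * N * (U * V) * N * U := by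
              rw [hN']; simp only [Matrix.mul_assoc]
          _ = V * (N * N) * U := by rw [huv]; simp only [Matrix.mul_assoc, Matrix.one_mul]
          _ = 0 := by rw [hN, Matrix.mul_zero, Matrix.zero_mul]
      have hmap : ∀ (A B : Matrix (Fin n) (Fin n) ℂ),
          (A * B).map (C : ℂ →+* ℂ[X]) = A.map C * B.map C := fun A B => by
        have := _root_.map_mul ((C : ℂ →+* ℂ[X]).mapMatrix) A B
        simpa [RingHom.mapMatrix_apply] using this
      have hkey : N * U = U * N' := by
        calc N * U = (U * V) * N * U := by rw [huv, Matrix.one_mul]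
          _ = U * N' := by rw [hN']; simp only [Matrix.mul_assoc]
      have hcomm : (1 + (X ^ k : ℂ[X]) • N.map C) * (C : ℂ →+* ℂ[X]).mapMatrix S =
          (C : ℂ →+* ℂ[X]).mapMatrix S * (1 + (X ^ k : ℂ[X]) • N'.map C) := by
        rw [RingHom.mapMatrix_apply, ← hu]
        rw [Matrix.add_mul, Matrix.mul_add, Matrix.one_mul, Matrix.mul_one,
          Matrix.smul_mul, Matrix.mul_smul, ← hmap, ← hmap, hkey]
      refine ⟨S, (1 + (X ^ k : ℂ[X]) • N'.map C) :: La, ⟨u, hu⟩, ?_, ?_⟩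
      · intro Q hQ
        rcases List.mem_cons.1 hQ with h' | h'
        · exact h' ▸ ⟨k, N', hk, hN'0, rfl⟩
        · exact hLa Q h'
      · rw [List.prod_cons, hprod, ← Matrix.mul_assoc, hcomm, List.prod_cons, Matrix.mul_assoc]

theorem allowed_eval0 (Q : Matrix (Fin n) (Fin n) ℂ[X]) (hQ : Allowed Q) :
    ((Polynomial.evalRingHom (0 : ℂ)).mapMatrix : Matrix (Fin n) (Fin n) ℂ[X] →+*
      Matrix (Fin n) (Fin n) ℂ) Q = 1 := by
  obtain ⟨k, N, hk, -, rfl⟩ := hQ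
  rw [map_add, _root_.map_one, RingHom.mapMatrix_apply]
  have : ((X ^ k : ℂ[X]) • N.map C).map (Polynomial.eval 0 : ℂ[X] → ℂ) = 0 := by
    ext a b
    simp [Matrix.map_apply, Matrix.smul_apply, smul_eq_mul, zero_pow (Nat.one_le_iff_ne_zero.1 hk)]
  rw [show ((X ^ k : ℂ[X]) • N.map C).map ⇑(Polynomial.evalRingHom (0 : ℂ)) =
    ((X ^ k : ℂ[X]) • N.map C).map (Polynomial.eval 0 : ℂ[X] → ℂ) from rfl, this, add_zero]

theorem mapC_eval0 (S : Matrix (Fin n) (Fin n) ℂ) :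
    ((Polynomial.evalRingHom (0 : ℂ)).mapMatrix ((C : ℂ →+* ℂ[X]).mapMatrix S)) = S := by
  ext a b
  simp [RingHom.mapMatrix_apply, Matrix.map_apply]

theorem poly_factorization (P : Matrix (Fin n) (Fin n) ℂ[X]) (hdet : P.det = 1)
    (hP0 : ((Polynomial.evalRingHom (0 : ℂ)).mapMatrix : Matrix (Fin n) (Fin n) ℂ[X] →+*
      Matrix (Fin n) (Fin n) ℂ) P = 1) :
    ∃ La : List (Matrix (Fin n) (Fin n) ℂ[X]), (∀ Q ∈ La, Allowed Q) ∧ P = La.prod := by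
  obtain ⟨L, L', D, hD, hfact⟩ := exists_transvec_diag_ED P (hdet ▸ isUnit_one)
  obtain ⟨Lg1, hLg1, hp1⟩ := transvec_list_decomp L
  obtain ⟨Lg2, hLg2, hp2⟩ := transvec_list_decomp L'
  obtain ⟨S0, hS0u, hS0⟩ := diag_decomp D hD
  set Lg : List (Matrix (Fin n) (Fin n) ℂ[X]) :=
    Lg1 ++ ((C : ℂ →+* ℂ[X]).mapMatrix S0 :: Lg2) with hLgdef
  have hGood : ∀ Q ∈ Lg, Good Q := by
    intro Q hQ
    rcases List.mem_append.1 hQ with h | h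
    · exact hLg1 Q h
    · rcases List.mem_cons.1 h with h' | h'
      · exact Or.inl ⟨S0, hS0u, h'⟩
      · exact hLg2 Q h'
  have hPLg : P = Lg.prod := by
    rw [hLgdef, List.prod_append, List.prod_cons, hfact, hp1, hp2, hS0, Matrix.mul_assoc]
  obtain ⟨S, La, hSu, hLa, hps⟩ := push_const Lg hGood
  have hPs : P = (C : ℂ →+* ℂ[X]).mapMatrix S * La.prod := by rw [hPLg, hps]
  set ev0 : Matrix (Fin n) (Fin n) ℂ[X] →+* Matrix (Fin n) (Fin n) ℂ :=
    (Polynomial.evalRingHom (0 : ℂ)).mapMatrix with hev0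
  have hprod1 : ev0 La.prod = 1 := by
    rw [map_list_prod]
    refine List.prod_eq_one ?_
    intro x hx
    obtain ⟨Q, hQ, rfl⟩ := List.mem_map.1 hx
    exact allowed_eval0 Q (hLa Q hQ)
  have hS1 : S = 1 := by
    have := congrArg ev0 hPs
    rw [hP0, _root_.map_mul, hprod1, mul_one, hev0, mapC_eval0] at this
    exact this.symm
  refine ⟨La, hLa, ?_⟩
  rw [hPs, hS1, _root_.map_one, Matrix.one_mul]

theorem extract_list (La : List (Matrix (Fin n) (Fin n) ℂ[X])) (h : ∀ Q ∈ La, Allowed Q) :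
    ∃ L : List (ℕ × Matrix (Fin n) (Fin n) ℂ),
      (∀ kN ∈ L, 1 ≤ kN.1 ∧ kN.2 * kN.2 = 0) ∧
      La = L.map (fun kN => 1 + (X ^ kN.1 : ℂ[X]) • kN.2.map C) := by
  induction La with
  | nil => exact ⟨[], by simp, by simp⟩
  | cons Q La IH =>
    obtain ⟨L, hL, hmap⟩ := IH (fun Q' hQ' => h Q' (List.mem_cons_of_mem _ hQ'))
    obtain ⟨k, N, hk, hN, rfl⟩ := h Q (List.mem_cons_self)
    refine ⟨(k, N) :: L, ?_, ?_⟩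
    · intro kN hkN
      rcases List.mem_cons.1 hkN with h' | h'
      · rw [h']; exact ⟨hk, hN⟩
      · exact hL kN h'
    · rw [List.map_cons, ← hmap]

end PolyPart

end OneSing

open Polynomial

/-- **One-singularity loops are products of the `m_{α,k,N}` (second part of the proof of
Theorem 3.2).**  If `g(λ) = Id + ∑_{i=1}^r (λ-α)^{-i} A_i` is invertible for every
`λ ≠ α`, then `g` is a finite product of loops `m_{α,k,N}(λ) = Id + (λ-α)^{-k} N` with
`k ≥ 1` an integer and `N² = 0`. -/
theorem one_singularity_GLnC (n : ℕ) (α : ℂ) (r : ℕ) (hr : 1 ≤ r)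
    (A : ℕ → Matrix (Fin n) (Fin n) ℂ)
    (g : ℂ → Matrix (Fin n) (Fin n) ℂ)
    (hg : ∀ l : ℂ, g l = 1 + ∑ i ∈ Finset.Icc 1 r, ((l - α) ^ i)⁻¹ • A i)
    (hinv : ∀ l : ℂ, l ≠ α → IsUnit (g l)) :
    ∃ L : List (ℕ × Matrix (Fin n) (Fin n) ℂ),
      (∀ kN ∈ L, 1 ≤ kN.1 ∧ kN.2 * kN.2 = 0) ∧
      ∀ l : ℂ, l ≠ α →
        g l = (L.map fun kN => 1 + ((l - α) ^ kN.1)⁻¹ • kN.2).prod := by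
  classical
  set P : Matrix (Fin n) (Fin n) ℂ[X] :=
    1 + ∑ i ∈ Finset.Icc 1 r, (X ^ i : ℂ[X]) • (A i).map C with hP
  -- evaluation of `P`
  have hEval : ∀ μ : ℂ, P.map (Polynomial.eval μ) =
      1 + ∑ i ∈ Finset.Icc 1 r, μ ^ i • A i := by
    intro μ
    ext a b
    simp only [hP, Matrix.map_apply, Matrix.add_apply, Matrix.sum_apply, Matrix.smul_apply,
      Matrix.one_apply, smul_eq_mul, apply_ite (Polynomial.eval μ), Polynomial.eval_add,
      Polynomial.eval_finset_sum, Polynomial.eval_mul, Polynomial.eval_pow, Polynomial.eval_X,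
      Polynomial.eval_C, Polynomial.eval_one, Polynomial.eval_zero]
  have hEval' : ∀ μ : ℂ, ((Polynomial.evalRingHom μ).mapMatrix :
      Matrix (Fin n) (Fin n) ℂ[X] →+* Matrix (Fin n) (Fin n) ℂ) P =
      1 + ∑ i ∈ Finset.Icc 1 r, μ ^ i • A i := fun μ => hEval μ
  -- `g` is the evaluation of `P`
  have hgP : ∀ l : ℂ, l ≠ α → g l = P.map (Polynomial.eval (l - α)⁻¹) := by
    intro l hl
    rw [hg l, hEval]
    congr 1
    refine Finset.sum_congr rfl (fun i _ => ?_)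
    rw [← inv_pow]
  -- the determinant of `P` is `1`
  have hP0 : ((Polynomial.evalRingHom (0 : ℂ)).mapMatrix :
      Matrix (Fin n) (Fin n) ℂ[X] →+* Matrix (Fin n) (Fin n) ℂ) P = 1 := by
    rw [hEval' 0]
    have : ∑ i ∈ Finset.Icc 1 r, (0 : ℂ) ^ i • A i = 0 := by
      refine Finset.sum_eq_zero (fun i hi => ?_)
      rw [zero_pow (by simp at hi; omega), zero_smul]
    rw [this, add_zero]
  have hq0 : Polynomial.eval 0 P.det = 1 := by
    have := RingHom.map_det (Polynomial.evalRingHom (0 : ℂ)) P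
    rw [show (Polynomial.evalRingHom (0 : ℂ)) P.det = Polynomial.eval 0 P.det from rfl] at this
    rw [this, hP0, Matrix.det_one]
  have hqne : ∀ μ : ℂ, Polynomial.eval μ P.det ≠ 0 := by
    intro μ
    have hdm : Polynomial.eval μ P.det = (P.map (Polynomial.eval μ)).det := by
      have := RingHom.map_det (Polynomial.evalRingHom μ) P
      exact this
    by_cases hμ : μ = 0
    · rw [hμ, hq0]; exact one_ne_zero
    · set l : ℂ := α + μ⁻¹ with hldef
      have hl : l ≠ α := by
        rw [hldef]
        intro hcontra
        have : μ⁻¹ = 0 := by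
          have := congrArg (· - α) hcontra
          simpa using this
        exact hμ (inv_eq_zero.1 this)
      have hlα : l - α = μ⁻¹ := by rw [hldef]; ring
      have : g l = P.map (Polynomial.eval μ) := by
        rw [hgP l hl, hlα, inv_inv]
      have hu : IsUnit (P.map (Polynomial.eval μ)).det :=
        (Matrix.isUnit_iff_isUnit_det _).1 (this ▸ hinv l hl)
      rw [hdm]
      exact hu.ne_zero
  have hdet : P.det = 1 := by
    by_cases hdq : P.det.degree = 0
    · have := Polynomial.eq_C_of_degree_le_zero (le_of_eq hdq)
      rw [this] at hq0 ⊢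
      rw [Polynomial.eval_C] at hq0
      rw [hq0, Polynomial.C_1]
    · obtain ⟨z, hz⟩ := IsAlgClosed.exists_root P.det hdq
      exact absurd hz (hqne z)
  -- factor into allowed loops
  obtain ⟨La, hLa, hPLa⟩ := OneSing.poly_factorization P hdet hP0
  obtain ⟨L, hL, hmap⟩ := OneSing.extract_list La hLa
  refine ⟨L, hL, ?_⟩
  intro l hl
  have hμ : ∀ k : ℕ, ((l - α)⁻¹) ^ k = ((l - α) ^ k)⁻¹ := fun k => inv_pow _ _
  rw [hgP l hl, hPLa, hmap]
  have : ∀ M : Matrix (Fin n) (Fin n) ℂ[X], M.map (Polynomial.eval (l - α)⁻¹) =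
      ((Polynomial.evalRingHom ((l - α)⁻¹)).mapMatrix :
        Matrix (Fin n) (Fin n) ℂ[X] →+* Matrix (Fin n) (Fin n) ℂ) M := fun M => rfl
  rw [this, map_list_prod, List.map_map]
  congr 1
  refine List.map_congr_left (fun kN hkN => ?_)
  show (Polynomial.evalRingHom ((l - α)⁻¹)).mapMatrix
      (1 + (X ^ kN.1 : ℂ[X]) • kN.2.map C) = 1 + ((l - α) ^ kN.1)⁻¹ • kN.2
  rw [RingHom.mapMatrix_apply]
  ext a b
  simp only [Matrix.map_apply, Matrix.add_apply, Matrix.smul_apply, smul_eq_mul,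
    Polynomial.coe_evalRingHom, Polynomial.eval_add, Polynomial.eval_mul, Polynomial.eval_pow,
    Polynomial.eval_X, Polynomial.eval_C, hμ]
  by_cases hab : a = b
  · subst hab
    rw [Matrix.one_apply_eq, Matrix.one_apply_eq, Polynomial.eval_one]
  · rw [Matrix.one_apply_ne hab, Matrix.one_apply_ne hab, Polynomial.eval_zero]
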